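/- arXiv:2205.12415 — 2 statements merged into one kernel-verified Lean document; each statement's English description precedes it below -/
import Mathlib

section
/- Let α be a composition, n ≥ ℓ(α). For σ ∈ C_α, let μ'_{C_α}(σ) = ∑_{σ̃ ∈ π^{-1}(σ)} (-1)^{barred(σ̃)}, summing over preimages under the bar-forgetting map π: C̃_α → C_α. Then ∑_{σ ∈ C_α} μ'_{C_α}(σ) y^σ = ∑_{σ ∈ P_α} μ_{P_α}(σ) y^σ, i.e., the signed generating function over the combinatorial set C̃_α equals the Möbius-weighted sum over the poset P_α. -/
open MvPolynomial Finset
open scoped Classical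

/-- The positive part of a weak composition: delete the zero entries. -/
def posList (l : List ℕ) : List ℕ := l.filter (fun x => x ≠ 0)

/-- `S_α`: length-`n` tuples of nonnegative integers whose positive part is `α`. -/
def Sset (α : List ℕ) (n : ℕ) : Set (Fin n → ℕ) :=
  {b | posList (List.ofFn b) = α}

/-- `P_α`: componentwise maxima of nonempty collections of elements of `S_α`. -/
def Pset (α : List ℕ) (n : ℕ) : Set (Fin n → ℕ) :=
  {σ | ∃ T : Finset (Fin n → ℕ), T.Nonempty ∧ (↑T : Set (Fin n → ℕ)) ⊆ Sset α n ∧ σ = T.sup id}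

/-- The local moves (M.1): `0p ↦ p0` and (M.2'): `0p ↦ pp` for `p > 0`. -/
inductive GlideMove : List ℕ → List ℕ → Prop
  | m1 (u v : List ℕ) (p : ℕ) (hp : 0 < p) :
      GlideMove (u ++ 0 :: p :: v) (u ++ p :: 0 :: v)
  | m2 (u v : List ℕ) (p : ℕ) (hp : 0 < p) :
      GlideMove (u ++ 0 :: p :: v) (u ++ p :: p :: v)

/-- `C_α`: strings obtainable from elements of `S_α` by iterated local moves. -/
def Cset (α : List ℕ) (n : ℕ) : Set (Fin n → ℕ) :=
  {σ | ∃ b ∈ Sset α n, Relation.ReflTransGen GlideMove (List.ofFn b) (List.ofFn σ)}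

-- Barred alphabet: `Sum.inl p` is the unbarred symbol `p`; `Sum.inr p` is `p̄`.
/-- The local moves (M.1): `0p ↦ p0` and (M.2): `0p ↦ p p̄` for unbarred `p > 0`. -/
inductive BGlideMove : List (ℕ ⊕ ℕ) → List (ℕ ⊕ ℕ) → Prop
  | m1 (u v : List (ℕ ⊕ ℕ)) (p : ℕ) (hp : 0 < p) :
      BGlideMove (u ++ Sum.inl 0 :: Sum.inl p :: v) (u ++ Sum.inl p :: Sum.inl 0 :: v)
  | m2 (u v : List (ℕ ⊕ ℕ)) (p : ℕ) (hp : 0 < p) :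
      BGlideMove (u ++ Sum.inl 0 :: Sum.inl p :: v) (u ++ Sum.inl p :: Sum.inr p :: v)

/-- `C̃_α`: barred strings obtainable from elements of `S_α` by iterated barred moves. -/
def CtildeSet (α : List ℕ) (n : ℕ) : Set (List (ℕ ⊕ ℕ)) :=
  {s | ∃ b ∈ Sset α n, Relation.ReflTransGen BGlideMove ((List.ofFn b).map Sum.inl) s}

/-- The bar-forgetting map `π`. -/
def unbar (s : List (ℕ ⊕ ℕ)) : List ℕ := s.map (Sum.elim id id)

/-- The number of barred symbols in a string. -/
def barredCount (s : List (ℕ ⊕ ℕ)) : ℕ := (s.filter (fun x => x.isRight)).length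



lemma posList_nil : posList [] = [] := rfl

lemma posList_cons_zero (b : List ℕ) : posList (0 :: b) = posList b := by
  simp [posList]

lemma posList_cons_pos (y : ℕ) (hy : y ≠ 0) (b : List ℕ) :
    posList (y :: b) = y :: posList b := by
  simp [posList, hy]

lemma posList_replicate (n : ℕ) : posList (List.replicate n 0) = [] := by
  induction n with
  | zero => rfl
  | succ n ih => simpa [List.replicate_succ, posList_cons_zero] using ih

/-- `hb α p`: there is a string `b ≤ p` (pointwise, same length) with positive part `α`. -/
def hb (α p : List ℕ) : Prop := ∃ b, List.Forall₂ (· ≤ ·) b p ∧ posList b = α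

lemma hb_nil_left (p : List ℕ) : hb [] p := by
  refine ⟨List.replicate p.length 0, ?_, posList_replicate _⟩
  induction p with
  | nil => simp
  | cons x p ih => simpa [List.replicate_succ] using List.Forall₂.cons (Nat.zero_le x) ih

lemma hb_nil_right (α : List ℕ) : hb α [] ↔ α = [] := by
  constructor
  · rintro ⟨b, hf, hp⟩
    cases hf
    simpa [posList] using hp.symm
  · rintro rfl; exact hb_nil_left []

lemma hb_mono {a : ℕ} {α p : List ℕ} (h : hb (a :: α) p) : hb α p := by
  obtain ⟨b, hf, hp⟩ := h
  induction hf generalizing α with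
  | nil => exact absurd hp (by simp [posList])
  | @cons y x b p hyx hf ih =>
    by_cases hy : y = 0
    · subst hy
      rw [posList_cons_zero] at hp
      obtain ⟨b', hf', hp'⟩ := ih hp
      exact ⟨0 :: b', List.Forall₂.cons (Nat.zero_le x) hf', by rw [posList_cons_zero, hp']⟩
    · rw [posList_cons_pos y hy] at hp
      obtain ⟨rfl, rfl⟩ := List.cons.inj hp
      exact ⟨0 :: b, List.Forall₂.cons (Nat.zero_le x) hf, by rw [posList_cons_zero]⟩

lemma hb_cons_iff {α : List ℕ} (hα : ∀ a ∈ α, 0 < a) (x : ℕ) (p : List ℕ) :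
    hb α (x :: p) ↔ hb α p ∨ (∃ a α', α = a :: α' ∧ a ≤ x ∧ hb α' p) := by
  constructor
  · rintro ⟨b, hf, hp⟩
    rcases hf with _ | ⟨hyx, hf⟩
    rename_i y b
    by_cases hy : y = 0
    · subst hy
      rw [posList_cons_zero] at hp
      exact Or.inl ⟨b, hf, hp⟩
    · rw [posList_cons_pos y hy] at hp
      exact Or.inr ⟨y, posList b, hp.symm, hyx, b, hf, rfl⟩
  · rintro (⟨b, hf, hp⟩ | ⟨a, α', rfl, hax, b, hf, hp⟩)
    · exact ⟨0 :: b, List.Forall₂.cons (Nat.zero_le x) hf, by rw [posList_cons_zero, hp]⟩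
    · have ha : a ≠ 0 := by have := hα a (by simp); omega
      exact ⟨a :: b, List.Forall₂.cons hax hf, by rw [posList_cons_pos a ha, hp]⟩

noncomputable def hbi (α p : List ℕ) : ℤ := if hb α p then 1 else 0

/-- Signed count of barred pattern strings below `p`, in state `c`, remaining blocks `α`. -/
noncomputable def g : Option ℕ → List ℕ → List ℕ → ℤ
  | _, α, [] => if α = [] then 1 else 0
  | c, α, x :: p =>
      g c α p
      + (match c with
         | some c₀ => if c₀ ≤ x then -(g c α p) else 0
         | none => 0)
      + (match α with
         | a :: α' => if a ≤ x ∧ 0 < a then g (some a) α' p else 0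
         | [] => 0)

lemma gmain (p : List ℕ) : ∀ α, (∀ a ∈ α, 0 < a) →
    g none α p = hbi α p ∧ ∀ c, 0 < c → g (some c) α p = hbi α p - hbi (c :: α) p := by
  induction p with
  | nil =>
    intro α hα
    constructor
    · simp [g, hbi, hb_nil_right]
    · intro c hc
      have h1 : ¬ hb (c :: α) [] := by rw [hb_nil_right]; simp
      by_cases hA : α = [] <;> simp [g, hbi, hb_nil_right, hA, h1]
  | cons x p ih =>
    intro α hα
    match α with
    | [] =>
      have I := ih [] (by simp)
      have hb0 : hb [] p := hb_nil_left p
      constructor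
      · simp [g, I.1, hbi, hb_nil_left]
      · intro c hc
        have hcpos : ∀ a ∈ [c], 0 < a := by simpa using hc
        have hrec : hb [c] (x :: p) ↔ hb [c] p ∨ c ≤ x := by
          rw [hb_cons_iff hcpos]
          constructor
          · rintro (h | ⟨a, α', he, hax, _⟩)
            · exact Or.inl h
            · obtain ⟨rfl, rfl⟩ := List.cons.inj he; exact Or.inr hax
          · rintro (h | h)
            · exact Or.inl h
            · exact Or.inr ⟨c, [], rfl, h, hb_nil_left p⟩
        have I2 := I.2 c hc
        have e1 : hbi [] (x :: p) = 1 := by simp [hbi, hb_nil_left]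
        simp only [g, I2, e1]
        by_cases h1 : hb [c] p <;> by_cases h2 : c ≤ x <;>
          simp [hbi, hrec, h1, h2, hb0] <;> ring
    | a :: α' =>
      have ha : 0 < a := hα a (by simp)
      have hα' : ∀ b ∈ α', 0 < b := fun b hbm => hα b (by simp [hbm])
      have I := ih (a :: α') hα
      have I' := ih α' hα'
      have IH3 := I'.2 a ha
      have hrec : hb (a :: α') (x :: p) ↔ hb (a :: α') p ∨ (a ≤ x ∧ hb α' p) := by
        rw [hb_cons_iff hα]
        constructor
        · rintro (h | ⟨a₁, α₁, he, hax, h⟩)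
          · exact Or.inl h
          · obtain ⟨rfl, rfl⟩ := List.cons.inj he; exact Or.inr ⟨hax, h⟩
        · rintro (h | ⟨h1, h2⟩)
          · exact Or.inl h
          · exact Or.inr ⟨a, α', rfl, h1, h2⟩
      constructor
      · simp only [g, I.1, IH3]
        by_cases hax : a ≤ x <;> by_cases hA : hb (a :: α') p <;> by_cases hA' : hb α' p <;>
          first
          | (exact absurd (hb_mono hA) hA')
          | (simp [hbi, hrec, hax, hA, hA', ha] <;> ring)
      · intro c hc
        have hposc : ∀ b ∈ c :: a :: α', 0 < b := by
          intro b hbm; rcases List.mem_cons.mp hbm with rfl | h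
          · exact hc
          · exact hα b h
        have hrec2 : hb (c :: a :: α') (x :: p) ↔ hb (c :: a :: α') p ∨ (c ≤ x ∧ hb (a :: α') p) := by
          rw [hb_cons_iff hposc]
          constructor
          · rintro (h | ⟨a₁, α₁, he, hax, h⟩)
            · exact Or.inl h
            · obtain ⟨rfl, rfl⟩ := List.cons.inj he; exact Or.inr ⟨hax, h⟩
          · rintro (h | ⟨h1, h2⟩)
            · exact Or.inl h
            · exact Or.inr ⟨c, a :: α', rfl, h1, h2⟩
        have I2 := I.2 c hc
        simp only [g, I2, IH3]
        by_cases hax : a ≤ x <;> by_cases hcx : c ≤ x <;>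
          by_cases hA : hb (a :: α') p <;> by_cases hA' : hb α' p <;>
          by_cases hC : hb (c :: a :: α') p <;>
          first
          | (exact absurd (hb_mono hA) hA')
          | (exact absurd (hb_mono hC) hA)
          | (simp [hbi, hrec, hrec2, hax, hcx, hA, hA', hC, ha] <;> ring)

lemma posList_replicate_append (k : ℕ) (l : List ℕ) :
    posList (List.replicate k 0 ++ l) = posList l := by
  induction k with
  | zero => rfl
  | succ k ih => simpa [List.replicate_succ, posList_cons_zero] using ih

/-- Pattern predicate: `Pat c α s` means the nonzero letters of `s` read left to right
are `(inr c)^* (inl a₁) (inr a₁)^* (inl a₂) (inr a₂)^* ⋯` for `α = [a₁, a₂, …]`. -/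
inductive Pat : Option ℕ → List ℕ → List (ℕ ⊕ ℕ) → Prop
  | nil (c) : Pat c [] []
  | zero {c α s} : Pat c α s → Pat c α (Sum.inl 0 :: s)
  | bar {c α s} : Pat (some c) α s → Pat (some c) α (Sum.inr c :: s)
  | leader {c a α s} (ha : 0 < a) : Pat (some a) α s → Pat c (a :: α) (Sum.inl a :: s)

lemma pat_weaken : ∀ {s α}, Pat none α s → ∀ c, Pat c α s := by
  intro s
  induction s with
  | nil => intro α h c; cases h; exact .nil c
  | cons y t ih =>
    intro α h c
    cases h with
    | zero h' => exact .zero (ih h' c)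
    | leader ha h' => exact .leader ha h'

lemma pat_start : ∀ (b : List ℕ), Pat none (posList b) (b.map Sum.inl) := by
  intro b
  induction b with
  | nil => exact .nil none
  | cons y b ih =>
    by_cases hy : y = 0
    · subst hy; rw [posList_cons_zero]; exact .zero ih
    · rw [posList_cons_pos y hy]
      exact .leader (Nat.pos_of_ne_zero hy) (pat_weaken ih _)

lemma pat_m1 : ∀ (u : List (ℕ ⊕ ℕ)) {c α} (v p), 0 < p →
    Pat c α (u ++ Sum.inl 0 :: Sum.inl p :: v) → Pat c α (u ++ Sum.inl p :: Sum.inl 0 :: v) := by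
  intro u
  induction u with
  | nil =>
    intro c α v p hp h
    simp only [List.nil_append] at *
    cases h with
    | zero h' =>
      cases h' with
      | zero h'' => exact absurd hp (by omega)
      | leader ha h'' => exact .leader ha (.zero h'')
    | leader ha _ => exact absurd ha (by omega)
  | cons y u ih =>
    intro c α v p hp h
    simp only [List.cons_append] at *
    cases h with
    | zero h' => exact .zero (ih v p hp h')
    | bar h' => exact .bar (ih v p hp h')
    | leader ha h' => exact .leader ha (ih v p hp h')

lemma pat_m2 : ∀ (u : List (ℕ ⊕ ℕ)) {c α} (v p), 0 < p →
    Pat c α (u ++ Sum.inl 0 :: Sum.inl p :: v) → Pat c α (u ++ Sum.inl p :: Sum.inr p :: v) := by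
  intro u
  induction u with
  | nil =>
    intro c α v p hp h
    simp only [List.nil_append] at *
    cases h with
    | zero h' =>
      cases h' with
      | zero h'' => exact absurd hp (by omega)
      | leader ha h'' => exact .leader ha (.bar h'')
    | leader ha _ => exact absurd ha (by omega)
  | cons y u ih =>
    intro c α v p hp h
    simp only [List.cons_append] at *
    cases h with
    | zero h' => exact .zero (ih v p hp h')
    | bar h' => exact .bar (ih v p hp h')
    | leader ha h' => exact .leader ha (ih v p hp h')

lemma pat_move {s t : List (ℕ ⊕ ℕ)} (h : BGlideMove s t) {c α} (hp : Pat c α s) :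
    Pat c α t := by
  cases h with
  | m1 u v p hpp => exact pat_m1 u v p hpp hp
  | m2 u v p hpp => exact pat_m2 u v p hpp hp

lemma pat_reach {s t : List (ℕ ⊕ ℕ)} (h : Relation.ReflTransGen BGlideMove s t)
    {c α} (hp : Pat c α s) : Pat c α t := by
  induction h with
  | refl => exact hp
  | tail _ hstep ih => exact pat_move hstep ih

lemma bmove_length {s t : List (ℕ ⊕ ℕ)} (h : BGlideMove s t) : s.length = t.length := by
  cases h <;> simp

lemma breach_length {s t : List (ℕ ⊕ ℕ)} (h : Relation.ReflTransGen BGlideMove s t) :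
    s.length = t.length := by
  induction h with
  | refl => rfl
  | tail _ hstep ih => exact ih.trans (bmove_length hstep)

lemma bmove_cons {s t : List (ℕ ⊕ ℕ)} (y : ℕ ⊕ ℕ) (h : BGlideMove s t) :
    BGlideMove (y :: s) (y :: t) := by
  cases h with
  | m1 u v p hp => exact BGlideMove.m1 (y :: u) v p hp
  | m2 u v p hp => exact BGlideMove.m2 (y :: u) v p hp

lemma bmove_append_right {s t : List (ℕ ⊕ ℕ)} (w : List (ℕ ⊕ ℕ)) (h : BGlideMove s t) :
    BGlideMove (s ++ w) (t ++ w) := by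
  cases h with
  | m1 u v p hp =>
    simpa [List.append_assoc] using BGlideMove.m1 u (v ++ w) p hp
  | m2 u v p hp =>
    simpa [List.append_assoc] using BGlideMove.m2 u (v ++ w) p hp

lemma breach_cons {s t : List (ℕ ⊕ ℕ)} (y : ℕ ⊕ ℕ)
    (h : Relation.ReflTransGen BGlideMove s t) :
    Relation.ReflTransGen BGlideMove (y :: s) (y :: t) := by
  induction h with
  | refl => exact .refl
  | tail _ hstep ih => exact ih.tail (bmove_cons y hstep)

lemma breach_append_left {s t : List (ℕ ⊕ ℕ)} (w : List (ℕ ⊕ ℕ))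
    (h : Relation.ReflTransGen BGlideMove s t) :
    Relation.ReflTransGen BGlideMove (w ++ s) (w ++ t) := by
  induction w with
  | nil => simpa using h
  | cons y w ih => exact breach_cons y ih

lemma breach_append_right {s t : List (ℕ ⊕ ℕ)} (w : List (ℕ ⊕ ℕ))
    (h : Relation.ReflTransGen BGlideMove s t) :
    Relation.ReflTransGen BGlideMove (s ++ w) (t ++ w) := by
  induction h with
  | refl => exact .refl
  | tail _ hstep ih => exact ih.tail (bmove_append_right w hstep)

/-- A single letter `a` can run left through zeros leaving an arbitrary trail `m`
of zeros and barred `a`s. -/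
lemma run (a : ℕ) (hp : 0 < a) :
    ∀ (m : List (ℕ ⊕ ℕ)), (∀ y ∈ m, y = Sum.inl 0 ∨ y = Sum.inr a) →
    Relation.ReflTransGen BGlideMove
      (List.replicate m.length (Sum.inl 0) ++ [Sum.inl a]) (Sum.inl a :: m) := by
  intro m
  induction m using List.reverseRecOn with
  | nil => intro _; simpa using Relation.ReflTransGen.refl
  | append_singleton m r ih =>
    intro hm
    have hr : r = Sum.inl 0 ∨ r = Sum.inr a := hm r (by simp)
    have step : BGlideMove
        (List.replicate m.length (Sum.inl 0) ++ Sum.inl 0 :: Sum.inl a :: [])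
        (List.replicate m.length (Sum.inl 0) ++ Sum.inl a :: r :: []) := by
      rcases hr with rfl | rfl
      · exact BGlideMove.m1 _ [] a hp
      · exact BGlideMove.m2 _ [] a hp
    have tail : Relation.ReflTransGen BGlideMove
        ((List.replicate m.length (Sum.inl 0) ++ [Sum.inl a]) ++ [r])
        ((Sum.inl a :: m) ++ [r]) :=
      breach_append_right [r] (ih (fun y hy => hm y (by simp [hy])))
    refine Relation.ReflTransGen.head
      (b := (List.replicate m.length (Sum.inl 0) ++ [Sum.inl a]) ++ [r]) ?_ ?_
    · have : (List.replicate (m ++ [r]).length (Sum.inl 0) ++ [Sum.inl a] : List (ℕ ⊕ ℕ))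
          = List.replicate m.length (Sum.inl 0) ++ Sum.inl 0 :: Sum.inl a :: [] := by
        simp [List.replicate_succ', List.append_assoc]
      rw [this]
      simpa [List.append_assoc] using step
    · simpa [List.append_assoc] using tail

lemma pat_split_bar : ∀ {s : List (ℕ ⊕ ℕ)} {c₀ α}, Pat (some c₀) α s →
    ∃ m s', s = m ++ s' ∧ (∀ y ∈ m, y = Sum.inl 0 ∨ y = Sum.inr c₀) ∧ Pat none α s' := by
  intro s
  induction s with
  | nil =>
    intro c₀ α h
    cases h
    exact ⟨[], [], rfl, by simp, .nil none⟩
  | cons y t ih =>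
    intro c₀ α h
    cases h with
    | zero h' =>
      obtain ⟨m, s', rfl, hm, hp⟩ := ih h'
      exact ⟨Sum.inl 0 :: m, s', rfl, by
        intro z hz; rcases List.mem_cons.mp hz with rfl | hz
        · exact Or.inl rfl
        · exact hm z hz, hp⟩
    | bar h' =>
      obtain ⟨m, s', rfl, hm, hp⟩ := ih h'
      exact ⟨Sum.inr c₀ :: m, s', rfl, by
        intro z hz; rcases List.mem_cons.mp hz with rfl | hz
        · exact Or.inr rfl
        · exact hm z hz, hp⟩
    | leader ha h' =>
      exact ⟨[], _, rfl, by simp, .leader ha h'⟩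

lemma pat_split_none : ∀ {s : List (ℕ ⊕ ℕ)} {α}, Pat none α s →
    (α = [] ∧ s = List.replicate s.length (Sum.inl 0)) ∨
    ∃ j a α' s', α = a :: α' ∧ 0 < a ∧
      s = List.replicate j (Sum.inl 0) ++ Sum.inl a :: s' ∧ Pat (some a) α' s' := by
  intro s
  induction s with
  | nil => intro α h; cases h; exact Or.inl ⟨rfl, rfl⟩
  | cons y t ih =>
    intro α h
    cases h with
    | zero h' =>
      rcases ih h' with ⟨rfl, ht⟩ | ⟨j, a, α', s', rfl, ha, rfl, hp⟩
      · exact Or.inl ⟨rfl, by rw [List.length_cons, List.replicate_succ]; exact congrArg _ ht⟩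
      · exact Or.inr ⟨j + 1, a, α', s', rfl, ha, by rw [List.replicate_succ]; rfl, hp⟩
    | leader ha h' =>
      exact Or.inr ⟨0, _, _, t, rfl, ha, rfl, h'⟩

lemma pat_reach_exists : ∀ (N : ℕ) (s : List (ℕ ⊕ ℕ)), s.length ≤ N → ∀ α, Pat none α s →
    ∃ b : List ℕ, posList b = α ∧ b.length = s.length ∧
      Relation.ReflTransGen BGlideMove (b.map Sum.inl) s := by
  intro N
  induction N with
  | zero =>
    intro s hs α h
    have : s = [] := List.length_eq_zero_iff.mp (Nat.le_zero.mp hs)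
    subst this
    cases h
    exact ⟨[], rfl, rfl, .refl⟩
  | succ N ih =>
    intro s hs α h
    rcases pat_split_none h with ⟨rfl, hrep⟩ | ⟨j, a, α', s₁, rfl, ha, rfl, hp⟩
    · refine ⟨List.replicate s.length 0, posList_replicate _, by simp, ?_⟩
      rw [List.map_replicate]
      exact hrep ▸ Relation.ReflTransGen.refl
    · obtain ⟨m, s₂, rfl, hm, hp₂⟩ := pat_split_bar hp
      have hlen : s₂.length ≤ N := by
        have := hs
        simp only [List.length_append, List.length_cons, List.length_replicate] at this
        omega
      obtain ⟨b₂, hb₂, hlen₂, hreach₂⟩ := ih s₂ hlen α' hp₂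
      refine ⟨List.replicate (j + m.length) 0 ++ a :: b₂, ?_, ?_, ?_⟩
      · rw [posList_replicate_append, posList_cons_pos a (by omega), hb₂]
      · simp [hlen₂]; omega
      · have step1 : Relation.ReflTransGen BGlideMove
            ((List.replicate j (Sum.inl 0) ++
              (List.replicate m.length (Sum.inl 0) ++ [Sum.inl a])) ++ b₂.map Sum.inl)
            ((List.replicate j (Sum.inl 0) ++ (Sum.inl a :: m)) ++ b₂.map Sum.inl) :=
          breach_append_right _ (breach_append_left _ (run a ha m hm))
        have step2 : Relation.ReflTransGen BGlideMove
            ((List.replicate j (Sum.inl 0) ++ Sum.inl a :: m) ++ b₂.map Sum.inl)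
            ((List.replicate j (Sum.inl 0) ++ Sum.inl a :: m) ++ s₂) :=
          breach_append_left _ hreach₂
        have e1 : ((List.replicate (j + m.length) 0 ++ a :: b₂).map Sum.inl : List (ℕ ⊕ ℕ))
            = (List.replicate j (Sum.inl 0) ++
              (List.replicate m.length (Sum.inl 0) ++ [Sum.inl a])) ++ b₂.map Sum.inl := by
          rw [List.map_append, List.map_replicate, List.map_cons, List.replicate_add,
            List.append_assoc]
          simp
        have e2 : (List.replicate j (Sum.inl 0) ++ Sum.inl a :: (m ++ s₂) : List (ℕ ⊕ ℕ))
            = (List.replicate j (Sum.inl 0) ++ Sum.inl a :: m) ++ s₂ := by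
          simp [List.append_assoc]
        rw [e1, e2]
        exact step1.trans step2

lemma list_to_fn {X : Type*} {n : ℕ} (l : List X) (h : l.length = n) :
    ∃ f : Fin n → X, List.ofFn f = l :=
  ⟨fun i => l.get (Fin.cast h.symm i), ((List.ofFn_congr h l.get).symm).trans (List.ofFn_get l)⟩

lemma ctilde_iff {α : List ℕ} {n : ℕ} (s : List (ℕ ⊕ ℕ)) :
    s ∈ CtildeSet α n ↔ Pat none α s ∧ s.length = n := by
  constructor
  · rintro ⟨b, hbS, hreach⟩
    refine ⟨pat_reach hreach ?_, ?_⟩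
    · have := pat_start (List.ofFn b)
      rwa [hbS] at this
    · have := breach_length hreach
      simpa using this.symm
  · rintro ⟨hp, hlen⟩
    obtain ⟨b, hbα, hblen, hreach⟩ := pat_reach_exists s.length s le_rfl α hp
    obtain ⟨bf, hbf⟩ := list_to_fn b (hblen.trans hlen)
    exact ⟨bf, by simp [Sset, hbf, hbα], by rw [hbf]; exact hreach⟩

/-- Pointwise domination of a barred string by a list of bounds. -/
def Below (s : List (ℕ ⊕ ℕ)) (p : List ℕ) : Prop :=
  List.Forall₂ (fun y x => Sum.elim id id y ≤ x) s p

noncomputable def strs : Option ℕ → List ℕ → List ℕ → Finset (List (ℕ ⊕ ℕ))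
  | _, α, [] => if α = [] then {([] : List (ℕ ⊕ ℕ))} else ∅
  | c, α, x :: p =>
      ((strs c α p).image (fun s => Sum.inl 0 :: s)) ∪
      (match c with
        | some c₀ =>
          if c₀ ≤ x then (strs c α p).image (fun s => Sum.inr c₀ :: s) else ∅
        | none => ∅) ∪
      (match α with
        | a :: α' =>
          if a ≤ x ∧ 0 < a then (strs (some a) α' p).image (fun s => Sum.inl a :: s) else ∅
        | [] => ∅)

lemma mem_strs : ∀ (p : List ℕ) (c : Option ℕ) (α : List ℕ) (s : List (ℕ ⊕ ℕ)),
    s ∈ strs c α p ↔ Pat c α s ∧ Below s p := by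
  intro p
  induction p with
  | nil =>
    intro c α s
    constructor
    · intro hs
      by_cases hα : α = []
      · subst hα
        simp [strs] at hs
        subst hs
        exact ⟨.nil c, List.Forall₂.nil⟩
      · simp [strs, hα] at hs
    · rintro ⟨hp, hB⟩
      cases hB
      cases hp
      simp [strs]
  | cons x p ih =>
    intro c α s
    constructor
    · intro hs
      simp only [strs, Finset.mem_union] at hs
      rcases hs with (h1 | h2) | h3
      · obtain ⟨t, ht, rfl⟩ := Finset.mem_image.mp h1
        obtain ⟨hp, hB⟩ := (ih c α t).mp ht
        exact ⟨.zero hp, List.Forall₂.cons (by simp) hB⟩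
      · match c with
        | none => simp at h2
        | some c₀ =>
          have h2' : s ∈ (if c₀ ≤ x
              then (strs (some c₀) α p).image (fun s => Sum.inr c₀ :: s) else ∅) := h2
          by_cases hc : c₀ ≤ x
          · rw [if_pos hc] at h2'
            obtain ⟨t, ht, rfl⟩ := Finset.mem_image.mp h2'
            obtain ⟨hp, hB⟩ := (ih (some c₀) α t).mp ht
            exact ⟨.bar hp, List.Forall₂.cons (by simpa) hB⟩
          · rw [if_neg hc] at h2'; simp at h2'
      · match α with
        | [] => simp at h3
        | a :: α' =>
          have h3' : s ∈ (if a ≤ x ∧ 0 < a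
              then (strs (some a) α' p).image (fun s => Sum.inl a :: s) else ∅) := h3
          by_cases hc : a ≤ x ∧ 0 < a
          · rw [if_pos hc] at h3'
            obtain ⟨t, ht, rfl⟩ := Finset.mem_image.mp h3'
            obtain ⟨hp, hB⟩ := (ih (some a) α' t).mp ht
            exact ⟨.leader hc.2 hp, List.Forall₂.cons (by simpa using hc.1) hB⟩
          · rw [if_neg hc] at h3'; simp at h3'
    · rintro ⟨hp, hB⟩
      simp only [strs, Finset.mem_union]
      cases hp with
      | nil => cases hB
      | @zero _ _ t hp' =>
        rcases hB with _ | ⟨hyx, hB⟩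
        exact Or.inl (Or.inl (Finset.mem_image.mpr ⟨t, (ih c α t).mpr ⟨hp', hB⟩, rfl⟩))
      | @bar c₀ _ t hp' =>
        rcases hB with _ | ⟨hyx, hB⟩
        refine Or.inl (Or.inr ?_)
        have hc : c₀ ≤ x := by simpa using hyx
        show _ ∈ (if c₀ ≤ x then (strs (some c₀) α p).image (fun s => Sum.inr c₀ :: s) else ∅)
        rw [if_pos hc]
        exact Finset.mem_image.mpr ⟨t, (ih (some c₀) α t).mpr ⟨hp', hB⟩, rfl⟩
      | @leader _ a α' t ha hp' =>
        rcases hB with _ | ⟨hyx, hB⟩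
        refine Or.inr ?_
        have hc : a ≤ x ∧ 0 < a := ⟨by simpa using hyx, ha⟩
        show _ ∈ (if a ≤ x ∧ 0 < a
            then (strs (some a) α' p).image (fun s => Sum.inl a :: s) else ∅)
        rw [if_pos hc]
        exact Finset.mem_image.mpr ⟨t, (ih (some a) α' t).mpr ⟨hp', hB⟩, rfl⟩

lemma barredCount_inl (a : ℕ) (s : List (ℕ ⊕ ℕ)) :
    barredCount (Sum.inl a :: s) = barredCount s := by
  simp [barredCount]

lemma barredCount_inr (a : ℕ) (s : List (ℕ ⊕ ℕ)) :
    barredCount (Sum.inr a :: s) = barredCount s + 1 := by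
  simp [barredCount, List.filter_cons]

lemma sum_strs : ∀ (p : List ℕ) (c : Option ℕ) (α : List ℕ),
    ∑ s ∈ strs c α p, (-1 : ℤ) ^ barredCount s = g c α p := by
  intro p
  induction p with
  | nil =>
    intro c α
    by_cases hα : α = [] <;> simp [strs, g, hα, barredCount]
  | cons x p ih =>
    intro c α
    have hinj : ∀ y : ℕ ⊕ ℕ, Function.Injective (fun s : List (ℕ ⊕ ℕ) => y :: s) :=
      fun y a b hab => by injection hab
    have sumim : ∀ (y : ℕ ⊕ ℕ) (S : Finset (List (ℕ ⊕ ℕ))),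
        ∑ s ∈ S.image (fun s => y :: s), (-1 : ℤ) ^ barredCount s
          = (if y.isRight then -1 else 1) * ∑ s ∈ S, (-1 : ℤ) ^ barredCount s := by
      intro y S
      rw [Finset.sum_image (fun a _ b _ h => hinj y h), Finset.mul_sum]
      refine Finset.sum_congr rfl fun s _ => ?_
      cases y with
      | inl a => simp [barredCount_inl]
      | inr a => simp [barredCount_inr, pow_succ, mul_comm]
    -- disjointness
    have hdisj1 : ∀ (S T : Finset (List (ℕ ⊕ ℕ))) (y z : ℕ ⊕ ℕ), y ≠ z →
        Disjoint (S.image (fun s => y :: s)) (T.image (fun s => z :: s)) := by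
      intro S T y z hyz
      rw [Finset.disjoint_left]
      rintro a ha hb
      obtain ⟨s, _, rfl⟩ := Finset.mem_image.mp ha
      obtain ⟨t, _, he⟩ := Finset.mem_image.mp hb
      injection he with h1 h2
      exact hyz h1.symm
    have hone : ((-1 : ℤ)) ^ barredCount ([] : List (ℕ ⊕ ℕ)) = 1 := by simp [barredCount]
    rcases c with _ | c₀ <;> rcases α with _ | ⟨a, α'⟩
    · have e : strs none [] (x :: p)
          = ((strs none [] p).image (fun s => Sum.inl 0 :: s)) ∪ ∅ ∪ ∅ := rfl
      have e2 : g none [] (x :: p) = g none [] p + 0 + 0 := rfl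
      rw [e, e2, Finset.union_empty, Finset.union_empty, sumim, ih]
      simp
    · have e : strs none (a :: α') (x :: p)
          = ((strs none (a :: α') p).image (fun s => Sum.inl 0 :: s)) ∪ ∅ ∪
            (if a ≤ x ∧ 0 < a
              then (strs (some a) α' p).image (fun s => Sum.inl a :: s) else ∅) := rfl
      have e2 : g none (a :: α') (x :: p) = g none (a :: α') p + 0 +
          (if a ≤ x ∧ 0 < a then g (some a) α' p else 0) := rfl
      rw [e, e2, Finset.union_empty]
      by_cases hl : a ≤ x ∧ 0 < a
      · rw [if_pos hl, if_pos hl,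
          Finset.sum_union (hdisj1 _ _ _ _ (by simp; omega)), sumim, sumim, ih, ih]
        simp
      · rw [if_neg hl, if_neg hl, Finset.union_empty, sumim, ih]
        simp
    · have e : strs (some c₀) [] (x :: p)
          = ((strs (some c₀) [] p).image (fun s => Sum.inl 0 :: s)) ∪
            (if c₀ ≤ x
              then (strs (some c₀) [] p).image (fun s => Sum.inr c₀ :: s) else ∅) ∪ ∅ := rfl
      have e2 : g (some c₀) [] (x :: p) = g (some c₀) [] p +
          (if c₀ ≤ x then -(g (some c₀) [] p) else 0) + 0 := rfl
      rw [e, e2, Finset.union_empty]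
      by_cases hc : c₀ ≤ x
      · rw [if_pos hc, if_pos hc,
          Finset.sum_union (hdisj1 _ _ _ _ (by simp)), sumim, sumim, ih]
        simp
      · rw [if_neg hc, if_neg hc, Finset.union_empty, sumim, ih]
        simp
    · have e : strs (some c₀) (a :: α') (x :: p)
          = ((strs (some c₀) (a :: α') p).image (fun s => Sum.inl 0 :: s)) ∪
            (if c₀ ≤ x
              then (strs (some c₀) (a :: α') p).image (fun s => Sum.inr c₀ :: s) else ∅) ∪
            (if a ≤ x ∧ 0 < a
              then (strs (some a) α' p).image (fun s => Sum.inl a :: s) else ∅) := rfl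
      have e2 : g (some c₀) (a :: α') (x :: p) = g (some c₀) (a :: α') p +
          (if c₀ ≤ x then -(g (some c₀) (a :: α') p) else 0) +
          (if a ≤ x ∧ 0 < a then g (some a) α' p else 0) := rfl
      rw [e, e2]
      by_cases hc : c₀ ≤ x <;> by_cases hl : a ≤ x ∧ 0 < a
      · rw [if_pos hc, if_pos hc, if_pos hl, if_pos hl,
          Finset.sum_union (Finset.disjoint_union_left.mpr
            ⟨hdisj1 _ _ _ _ (by simp; omega), hdisj1 _ _ _ _ (by simp)⟩),
          Finset.sum_union (hdisj1 _ _ _ _ (by simp)), sumim, sumim, sumim, ih, ih]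
        simp
      · rw [if_pos hc, if_pos hc, if_neg hl, if_neg hl, Finset.union_empty,
          Finset.sum_union (hdisj1 _ _ _ _ (by simp)), sumim, sumim, ih]
        simp
      · rw [if_neg hc, if_neg hc, if_pos hl, if_pos hl, Finset.union_empty,
          Finset.sum_union (hdisj1 _ _ _ _ (by simp; omega)), sumim, sumim, ih, ih]
        simp
      · rw [if_neg hc, if_neg hc, if_neg hl, if_neg hl, Finset.union_empty,
          Finset.union_empty, sumim, ih]
        simp

section AuxAssembly

lemma ofFn_getD {X : Type*} {n : ℕ} (l : List X) (d : X) (h : l.length = n) :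
    List.ofFn (fun i : Fin n => l.getD i d) = l := by
  apply List.ext_getElem (by simp [h])
  intro i h1 h2
  simp only [List.getElem_ofFn]
  rw [List.getD_eq_getElem?_getD, List.getElem?_eq_getElem (by omega)]
  rfl

lemma getD_ofFn {X : Type*} {n : ℕ} (f : Fin n → X) (d : X) (i : Fin n) :
    (List.ofFn f).getD i d = f i := by
  rw [List.getD_eq_getElem?_getD, List.getElem?_eq_getElem (by simp)]
  simp

lemma forall₂_ofFn {X Y : Type*} {R : X → Y → Prop} {n : ℕ} (f : Fin n → X) (g : Fin n → Y) :
    List.Forall₂ R (List.ofFn f) (List.ofFn g) ↔ ∀ i, R (f i) (g i) := by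
  rw [List.forall₂_iff_get]
  constructor
  · rintro ⟨-, h⟩ i
    have := h i (by simp) (by simp)
    rwa [List.get_ofFn, List.get_ofFn] at this
  · intro h
    refine ⟨by simp, fun i h1 h2 => ?_⟩
    rw [List.get_ofFn, List.get_ofFn]
    apply h

lemma unbar_map_inl (l : List ℕ) : unbar (l.map Sum.inl) = l := by
  simp [unbar]

lemma unbar_length (s : List (ℕ ⊕ ℕ)) : (unbar s).length = s.length := by
  simp [unbar]

lemma unbar_bmove {s t : List (ℕ ⊕ ℕ)} (h : BGlideMove s t) :
    GlideMove (unbar s) (unbar t) := by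
  cases h with
  | m1 u v p hp =>
    simpa [unbar] using GlideMove.m1 (unbar u) (unbar v) p hp
  | m2 u v p hp =>
    simpa [unbar] using GlideMove.m2 (unbar u) (unbar v) p hp

lemma unbar_breach {s t : List (ℕ ⊕ ℕ)} (h : Relation.ReflTransGen BGlideMove s t) :
    Relation.ReflTransGen GlideMove (unbar s) (unbar t) := by
  induction h with
  | refl => exact .refl
  | tail _ hstep ih => exact ih.tail (unbar_bmove hstep)

lemma below_iff_unbar {s : List (ℕ ⊕ ℕ)} {p : List ℕ} :
    Below s p ↔ List.Forall₂ (· ≤ ·) (unbar s) p := by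
  rw [unbar, List.forall₂_map_left_iff]
  rfl

lemma sset_sub_pset {α : List ℕ} {n : ℕ} {q : Fin n → ℕ} (hq : q ∈ Sset α n) :
    q ∈ Pset α n :=
  ⟨{q}, Finset.singleton_nonempty q, by simpa using hq, by simp⟩

/-- Translation of `hb` to the function language. -/
lemma hb_iff_exists {α : List ℕ} {n : ℕ} (pf : Fin n → ℕ) :
    hb α (List.ofFn pf) ↔ ∃ b ∈ Sset α n, b ≤ pf := by
  constructor
  · rintro ⟨b, hf, hp⟩
    have hlen : b.length = n := by simpa using hf.length_eq
    obtain ⟨bf, hbf⟩ := list_to_fn b hlen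
    refine ⟨bf, by simp [Sset, hbf, hp], ?_⟩
    intro i
    have := (forall₂_ofFn bf pf).mp (by rwa [hbf])
    exact this i
  · rintro ⟨bf, hbS, hble⟩
    exact ⟨List.ofFn bf, (forall₂_ofFn bf pf).mpr hble, hbS⟩

end AuxAssembly

lemma S1lem (α : List ℕ) (hα : ∀ a ∈ α, 0 < a) (n : ℕ)
    (FC : Finset (Fin n → ℕ)) (hFC : (↑FC : Set (Fin n → ℕ)) = Cset α n)
    (G : (Fin n → ℕ) → Finset (List (ℕ ⊕ ℕ)))
    (hG : ∀ σ ∈ FC, (↑(G σ) : Set (List (ℕ ⊕ ℕ)))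
        = {s | s ∈ CtildeSet α n ∧ unbar s = List.ofFn σ})
    (pf : Fin n → ℕ) :
    ∑ q ∈ FC.filter (fun q => q ≤ pf), (∑ s ∈ G q, (-1 : ℤ) ^ barredCount s)
      = if ∃ b ∈ Sset α n, b ≤ pf then 1 else 0 := by
  set plist := List.ofFn pf with hplist
  set key : List (ℕ ⊕ ℕ) → (Fin n → ℕ) := fun s i => (unbar s).getD i 0 with hkey
  have hprop : ∀ s ∈ strs none α plist,
      s ∈ CtildeSet α n ∧ List.ofFn (key s) = unbar s ∧ key s ∈ FC ∧ key s ≤ pf := by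
    intro s hs
    obtain ⟨hp, hB⟩ := (mem_strs plist none α s).mp hs
    have hlen : s.length = n := by
      have := hB.length_eq
      simpa [hplist] using this
    have hsC : s ∈ CtildeSet α n := (ctilde_iff s).mpr ⟨hp, hlen⟩
    have hofkey : List.ofFn (key s) = unbar s :=
      ofFn_getD (unbar s) 0 (by rw [unbar_length, hlen])
    have hF2 : List.Forall₂ (· ≤ ·) (List.ofFn (key s)) (List.ofFn pf) := by
      rw [hofkey]; exact below_iff_unbar.mp hB
    refine ⟨hsC, hofkey, ?_, (forall₂_ofFn _ _).mp hF2⟩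
    rw [← Finset.mem_coe, hFC]
    obtain ⟨bf, hbfS, hreach⟩ := hsC
    refine ⟨bf, hbfS, ?_⟩
    have := unbar_breach hreach
    rwa [unbar_map_inl, ← hofkey] at this
  have hmapsto : ∀ s ∈ strs none α plist, key s ∈ FC.filter (fun q => q ≤ pf) := by
    intro s hs
    obtain ⟨-, -, h1, h2⟩ := hprop s hs
    exact Finset.mem_filter.mpr ⟨h1, h2⟩
  have hfib : ∀ q ∈ FC.filter (fun q => q ≤ pf),
      (strs none α plist).filter (fun s => key s = q) = G q := by
    intro q hq
    obtain ⟨hqFC, hqle⟩ := Finset.mem_filter.mp hq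
    have hGm : ∀ s, s ∈ G q ↔ s ∈ CtildeSet α n ∧ unbar s = List.ofFn q := by
      intro s
      rw [← Finset.mem_coe, hG q hqFC]
      rfl
    apply Finset.ext
    intro s
    rw [Finset.mem_filter, hGm]
    constructor
    · rintro ⟨hs, hkeyq⟩
      obtain ⟨hsC, hofkey, -, -⟩ := hprop s hs
      exact ⟨hsC, by rw [← hofkey, hkeyq]⟩
    · rintro ⟨hsC, hunb⟩
      obtain ⟨hp, hlen⟩ := (ctilde_iff s).mp hsC
      have hB : Below s plist := by
        rw [below_iff_unbar, hunb, hplist]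
        exact (forall₂_ofFn _ _).mpr hqle
      refine ⟨(mem_strs plist none α s).mpr ⟨hp, hB⟩, ?_⟩
      funext i
      show (unbar s).getD i 0 = q i
      rw [hunb, getD_ofFn]
  calc
    ∑ q ∈ FC.filter (fun q => q ≤ pf), (∑ s ∈ G q, (-1 : ℤ) ^ barredCount s)
      = ∑ q ∈ FC.filter (fun q => q ≤ pf),
          ∑ s ∈ (strs none α plist).filter (fun s => key s = q), (-1 : ℤ) ^ barredCount s := by
        refine Finset.sum_congr rfl fun q hq => ?_
        rw [hfib q hq]
    _ = ∑ s ∈ strs none α plist, (-1 : ℤ) ^ barredCount s :=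
        Finset.sum_fiberwise_of_maps_to hmapsto _
    _ = g none α plist := sum_strs plist none α
    _ = hbi α plist := (gmain plist α hα).1
    _ = if ∃ b ∈ Sset α n, b ≤ pf then 1 else 0 := by
        rw [hbi]
        by_cases h : hb α plist
        · rw [if_pos h, if_pos ((hb_iff_exists pf).mp h)]
        · rw [if_neg h, if_neg (fun hc => h ((hb_iff_exists pf).mpr hc))]

lemma S2lem (α : List ℕ) (n : ℕ)
    (FP : Finset (Fin n → ℕ)) (hFP : (↑FP : Set (Fin n → ℕ)) = Pset α n)
    (μ : (Fin n → ℕ) → ℤ)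
    (hμ : ∀ p ∈ FP, ∑ q ∈ FP.filter (fun q => q ≤ p), μ q = 1)
    (pf : Fin n → ℕ) :
    ∑ q ∈ FP.filter (fun q => q ≤ pf), μ q
      = if ∃ b ∈ Sset α n, b ≤ pf then 1 else 0 := by
  have hmemFP : ∀ q : Fin n → ℕ, q ∈ FP ↔ q ∈ Pset α n := by
    intro q; rw [← Finset.mem_coe, hFP]
  by_cases hex : ∃ b ∈ Sset α n, b ≤ pf
  · obtain ⟨b0, hb0S, hb0le⟩ := hex
    rw [if_pos ⟨b0, hb0S, hb0le⟩]
    set T : Finset (Fin n → ℕ) :=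
      (FP.filter (fun q => q ∈ Sset α n)).filter (fun q => q ≤ pf) with hT
    have hmemT : ∀ q, q ∈ T ↔ q ∈ FP ∧ q ∈ Sset α n ∧ q ≤ pf := by
      intro q; simp [hT, Finset.mem_filter, and_assoc]
    have hTne : T.Nonempty :=
      ⟨b0, (hmemT b0).mpr ⟨(hmemFP b0).mpr (sset_sub_pset hb0S), hb0S, hb0le⟩⟩
    set pstar : Fin n → ℕ := T.sup id with hpstar
    have hpstarP : pstar ∈ Pset α n := by
      refine ⟨T, hTne, ?_, rfl⟩
      intro q hq
      exact ((hmemT q).mp hq).2.1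
    have hpstar_le : pstar ≤ pf := Finset.sup_le fun q hq => ((hmemT q).mp hq).2.2
    have hfilter_eq : FP.filter (fun q => q ≤ pf) = FP.filter (fun q => q ≤ pstar) := by
      apply Finset.ext
      intro q
      simp only [Finset.mem_filter]
      constructor
      · rintro ⟨hqFP, hqle⟩
        refine ⟨hqFP, ?_⟩
        obtain ⟨T', hT'ne, hT'sub, rfl⟩ := (hmemFP q).mp hqFP
        refine Finset.sup_le fun b hb => ?_
        have hbS : b ∈ Sset α n := hT'sub hb
        have hbT : b ∈ T := (hmemT b).mpr
          ⟨(hmemFP b).mpr (sset_sub_pset hbS), hbS,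
            le_trans (Finset.le_sup (f := id) hb) hqle⟩
        exact Finset.le_sup (f := id) hbT
      · rintro ⟨hqFP, hqle⟩
        exact ⟨hqFP, le_trans hqle hpstar_le⟩
    rw [hfilter_eq]
    exact hμ pstar ((hmemFP pstar).mpr hpstarP)
  · rw [if_neg hex]
    apply Finset.sum_eq_zero
    intro q hq
    obtain ⟨hqFP, hqle⟩ := Finset.mem_filter.mp hq
    obtain ⟨T', hT'ne, hT'sub, rfl⟩ := (hmemFP q).mp hqFP
    obtain ⟨b, hb⟩ := hT'ne
    exact absurd ⟨b, hT'sub hb, le_trans (Finset.le_sup (f := id) hb) hqle⟩ hex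

/-- The signed generating function over `C̃_α` equals the Möbius-weighted sum over
`P_α`: `∑_{σ ∈ C_α} μ'_{C_α}(σ) y^σ = ∑_{σ ∈ P_α} μ_{P_α}(σ) y^σ`, where
`μ'_{C_α}(σ) = ∑_{σ̃ ∈ π⁻¹(σ)} (-1)^{barred(σ̃)}`. -/
theorem stmt_10 (α : List ℕ) (hα : ∀ a ∈ α, 0 < a) (n : ℕ) (hn : α.length ≤ n)
    (FP : Finset (Fin n → ℕ)) (hFP : (↑FP : Set (Fin n → ℕ)) = Pset α n)
    (μ : (Fin n → ℕ) → ℤ)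
    (hμ : ∀ p ∈ FP, ∑ q ∈ FP.filter (fun q => q ≤ p), μ q = 1)
    (FC : Finset (Fin n → ℕ)) (hFC : (↑FC : Set (Fin n → ℕ)) = Cset α n)
    (G : (Fin n → ℕ) → Finset (List (ℕ ⊕ ℕ)))
    (hG : ∀ σ ∈ FC, (↑(G σ) : Set (List (ℕ ⊕ ℕ)))
        = {s | s ∈ CtildeSet α n ∧ unbar s = List.ofFn σ}) :
    ∑ σ ∈ FC, (∑ s ∈ G σ, (-1 : ℤ) ^ barredCount s) •
        ∏ i : Fin n, (X i : MvPolynomial (Fin n) ℤ) ^ σ i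
      = ∑ σ ∈ FP, μ σ • ∏ i : Fin n, (X i : MvPolynomial (Fin n) ℤ) ^ σ i := by
  classical
  set mono : (Fin n → ℕ) → MvPolynomial (Fin n) ℤ :=
    fun σ => ∏ i : Fin n, (X i : MvPolynomial (Fin n) ℤ) ^ σ i with hmono
  set cC : (Fin n → ℕ) → ℤ :=
    fun q => if q ∈ FC then ∑ s ∈ G q, (-1 : ℤ) ^ barredCount s else 0 with hcC
  set cP : (Fin n → ℕ) → ℤ := fun q => if q ∈ FP then μ q else 0 with hcP
  have hS1 : ∀ pf : Fin n → ℕ, ∑ q ∈ FC.filter (fun q => q ≤ pf), cC q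
      = if ∃ b ∈ Sset α n, b ≤ pf then 1 else 0 := by
    intro pf
    rw [← S1lem α hα n FC hFC G hG pf]
    exact Finset.sum_congr rfl fun q hq => by
      rw [hcC]; exact if_pos (Finset.mem_filter.mp hq).1
  have hS2 : ∀ pf : Fin n → ℕ, ∑ q ∈ FP.filter (fun q => q ≤ pf), cP q
      = if ∃ b ∈ Sset α n, b ≤ pf then 1 else 0 := by
    intro pf
    rw [← S2lem α n FP hFP μ hμ pf]
    exact Finset.sum_congr rfl fun q hq => by
      rw [hcP]; exact if_pos (Finset.mem_filter.mp hq).1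
  have main : ∀ N : ℕ, ∀ σ : Fin n → ℕ, σ ∈ FC ∪ FP → (∑ i, σ i) < N → cC σ = cP σ := by
    intro N
    induction N with
    | zero => intro σ _ h; omega
    | succ N ih =>
      intro σ hσ hlt
      set E := (FC ∪ FP).filter (fun q => q ≤ σ) with hE
      have hσE : σ ∈ E := Finset.mem_filter.mpr ⟨hσ, le_rfl⟩
      have hsumC : ∑ q ∈ E, cC q = ∑ q ∈ FC.filter (fun q => q ≤ σ), cC q := by
        refine (Finset.sum_subset ?_ ?_).symm
        · intro q hq
          obtain ⟨h1, h2⟩ := Finset.mem_filter.mp hq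
          exact Finset.mem_filter.mpr ⟨Finset.mem_union_left _ h1, h2⟩
        · intro q hqE hqn
          have hq : q ∉ FC := fun hqFC =>
            hqn (Finset.mem_filter.mpr ⟨hqFC, (Finset.mem_filter.mp hqE).2⟩)
          rw [hcC]
          exact if_neg hq
      have hsumP : ∑ q ∈ E, cP q = ∑ q ∈ FP.filter (fun q => q ≤ σ), cP q := by
        refine (Finset.sum_subset ?_ ?_).symm
        · intro q hq
          obtain ⟨h1, h2⟩ := Finset.mem_filter.mp hq
          exact Finset.mem_filter.mpr ⟨Finset.mem_union_right _ h1, h2⟩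
        · intro q hqE hqn
          have hq : q ∉ FP := fun hqFP =>
            hqn (Finset.mem_filter.mpr ⟨hqFP, (Finset.mem_filter.mp hqE).2⟩)
          rw [hcP]
          exact if_neg hq
      have h1 : ∑ q ∈ E, cC q = ∑ q ∈ E, cP q := by
        rw [hsumC, hsumP, hS1 σ, hS2 σ]
      have h2 : ∑ q ∈ E.erase σ, cC q = ∑ q ∈ E.erase σ, cP q := by
        refine Finset.sum_congr rfl fun q hq => ?_
        obtain ⟨hne, hqE⟩ := Finset.mem_erase.mp hq
        obtain ⟨hqU, hqle⟩ := Finset.mem_filter.mp hqE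
        have hlt' : (∑ i, q i) < (∑ i, σ i) := by
          obtain ⟨i, hi⟩ := Function.ne_iff.mp hne
          exact Finset.sum_lt_sum (fun j _ => hqle j)
            ⟨i, Finset.mem_univ i, lt_of_le_of_ne (hqle i) hi⟩
        exact ih q hqU (by omega)
      have h3 := Finset.add_sum_erase E cC hσE
      have h4 := Finset.add_sum_erase E cP hσE
      omega
  have hCP : ∀ σ ∈ FC ∪ FP, cC σ = cP σ := fun σ hσ =>
    main ((∑ i, σ i) + 1) σ hσ (by omega)
  calc
    ∑ σ ∈ FC, (∑ s ∈ G σ, (-1 : ℤ) ^ barredCount s) • mono σ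
        = ∑ σ ∈ FC, cC σ • mono σ := by
          refine Finset.sum_congr rfl fun σ hσ => ?_
          simp only [hcC]
          rw [if_pos hσ]
    _ = ∑ σ ∈ FC ∪ FP, cC σ • mono σ := by
          refine Finset.sum_subset Finset.subset_union_left ?_
          intro q _ hq
          simp only [hcC]
          rw [if_neg hq, zero_smul]
    _ = ∑ σ ∈ FC ∪ FP, cP σ • mono σ :=
          Finset.sum_congr rfl fun σ hσ => by rw [hCP σ hσ]
    _ = ∑ σ ∈ FP, cP σ • mono σ := by
          refine (Finset.sum_subset Finset.subset_union_right ?_).symm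
          intro q _ hq
          simp only [hcP]
          rw [if_neg hq, zero_smul]
    _ = ∑ σ ∈ FP, μ σ • mono σ := by
          refine Finset.sum_congr rfl fun σ hσ => ?_
          simp only [hcP]
          rw [if_pos hσ]
end

section
/- The overlapping shuffle product of compositions is commutative and associative: for all compositions α, β, γ, one has α ⧢_o β = β ⧢_o α and (α ⧢_o β) ⧢_o γ = α ⧢_o (β ⧢_o γ) as formal ℤ-linear combinations of compositions. -/
open MvPolynomial Finset
open scoped Classical

/-- An overlapping shuffle of `(m,n)`: a surjection `τ : [m+n] → [k]` that is
strictly increasing on the first `m` elements and on the last `n` elements. -/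
def IsOverlappingShuffle (m n : ℕ) {k : ℕ} (τ : Fin (m + n) → Fin k) : Prop :=
  Function.Surjective τ ∧
    (∀ i j : Fin (m + n), (i : ℕ) < (j : ℕ) → (j : ℕ) < m → τ i < τ j) ∧
    (∀ i j : Fin (m + n), m ≤ (i : ℕ) → (i : ℕ) < (j : ℕ) → τ i < τ j)

/-- The composition `γ^τ` with `γ^τ_i = ∑_{τ(j)=i} (α⌢β)_j`. -/
def gammaComp (α β : List ℕ) {k : ℕ} (τ : Fin (α.length + β.length) → Fin k) : List ℕ :=
  List.ofFn (fun i : Fin k =>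
    ∑ j : Fin (α.length + β.length), if τ j = i then (α ++ β).getD (j : ℕ) 0 else 0)

/-- `c_{α,β}^γ`: the number of overlapping shuffles `τ` of `(ℓ(α), ℓ(β))` with
`γ^τ = γ`. -/
noncomputable def shuffleCoeff (α β γ : List ℕ) : ℕ :=
  Nat.card {τ : Fin (α.length + β.length) → Fin γ.length //
    IsOverlappingShuffle α.length β.length τ ∧ gammaComp α β τ = γ}

/-- The truncated monomial quasisymmetric function
`M_{N,α} = ∑_{i_1 < ⋯ < i_k ≤ N} x_{i_1}^{α_1} ⋯ x_{i_k}^{α_k}`. -/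
noncomputable def Mqs (N : ℕ) (α : List ℕ) : MvPolynomial (Fin N) ℤ :=
  ∑ j ∈ Finset.univ.filter (fun j : Fin α.length → Fin N => StrictMono j),
    ∏ t : Fin α.length, X (j t) ^ α.get t

/-! ### helpers -/

lemma getD_append_ite (l1 l2 : List ℕ) (i : ℕ) :
    (l1 ++ l2).getD i 0 = if i < l1.length then l1.getD i 0 else l2.getD (i - l1.length) 0 := by
  split_ifs with h
  · exact List.getD_append _ _ _ _ h
  · exact List.getD_append_right _ _ _ _ (le_of_not_gt h)

/-- flip of the two blocks -/
def flipFun (m n : ℕ) : Fin (n + m) → Fin (m + n) := fun j =>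
  if h : (j : ℕ) < n then ⟨m + j, by omega⟩ else ⟨(j : ℕ) - n, by omega⟩

lemma flipFun_val (m n : ℕ) (j : Fin (n + m)) :
    (flipFun m n j : ℕ) = if (j : ℕ) < n then m + j else (j : ℕ) - n := by
  unfold flipFun; split_ifs <;> rfl

lemma flipFun_flipFun (m n : ℕ) (j : Fin (m + n)) :
    flipFun m n (flipFun n m j) = j := by
  apply Fin.ext
  rw [flipFun_val, flipFun_val]
  have := j.2
  split_ifs <;> omega

def flipEquiv (m n : ℕ) : Fin (n + m) ≃ Fin (m + n) :=
  ⟨flipFun m n, flipFun n m, fun j => flipFun_flipFun n m j, fun j => flipFun_flipFun m n j⟩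

lemma isOSh_flip {m n k : ℕ} {τ : Fin (m + n) → Fin k} (h : IsOverlappingShuffle m n τ) :
    IsOverlappingShuffle n m (τ ∘ flipFun m n) := by
  obtain ⟨hs, h1, h2⟩ := h
  refine ⟨fun x => ?_, fun i j hij hj => ?_, fun i j hi hij => ?_⟩
  · obtain ⟨y, hy⟩ := hs x
    exact ⟨flipFun n m y, by simpa [Function.comp, flipFun_flipFun] using hy⟩
  · have vi : (flipFun m n i : ℕ) = m + i := by rw [flipFun_val, if_pos (by omega)]
    have vj : (flipFun m n j : ℕ) = m + j := by rw [flipFun_val, if_pos hj]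
    exact h2 _ _ (by omega) (by omega)
  · have vi : (flipFun m n i : ℕ) = (i : ℕ) - n := by rw [flipFun_val, if_neg (by omega)]
    have vj : (flipFun m n j : ℕ) = (j : ℕ) - n := by rw [flipFun_val, if_neg (by omega)]
    exact h1 _ _ (by omega) (by have := j.2; omega)

lemma getD_flip (α β : List ℕ) (j : Fin (β.length + α.length)) :
    (β ++ α).getD (j : ℕ) 0 = (α ++ β).getD ((flipFun α.length β.length j : Fin _) : ℕ) 0 := by
  rw [getD_append_ite, getD_append_ite, flipFun_val]
  have := j.2
  split_ifs <;> first
    | omega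
    | (congr 1; omega)

lemma gammaComp_flip (α β : List ℕ) {k : ℕ} (τ : Fin (α.length + β.length) → Fin k) :
    gammaComp β α (τ ∘ flipFun α.length β.length) = gammaComp α β τ := by
  unfold gammaComp
  congr 1
  funext i
  refine Fintype.sum_equiv (flipEquiv α.length β.length) _ _ (fun j => ?_)
  have he : (flipEquiv α.length β.length) j = flipFun α.length β.length j := rfl
  simp only [Function.comp, he]
  congr 1
  exact getD_flip α β j

lemma shuffleCoeff_comm (α β δ : List ℕ) : shuffleCoeff α β δ = shuffleCoeff β α δ := by
  unfold shuffleCoeff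
  apply Nat.card_congr
  refine ⟨fun t => ⟨t.1 ∘ flipFun α.length β.length, isOSh_flip t.2.1,
      by rw [gammaComp_flip]; exact t.2.2⟩,
    fun t => ⟨t.1 ∘ flipFun β.length α.length, isOSh_flip t.2.1,
      by rw [gammaComp_flip]; exact t.2.2⟩, ?_, ?_⟩
  · rintro ⟨τ, h⟩
    apply Subtype.ext
    funext j
    simp [Function.comp, flipFun_flipFun]
  · rintro ⟨τ, h⟩
    apply Subtype.ext
    funext j
    simp [Function.comp, flipFun_flipFun]
/-! ### triple shuffles -/

def IsTriple (m n p : ℕ) {K : ℕ} (σ : Fin (m + n + p) → Fin K) : Prop :=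
  Function.Surjective σ ∧
    (∀ i j : Fin (m + n + p), (i : ℕ) < (j : ℕ) → (j : ℕ) < m → σ i < σ j) ∧
    (∀ i j : Fin (m + n + p), m ≤ (i : ℕ) → (i : ℕ) < (j : ℕ) → (j : ℕ) < m + n → σ i < σ j) ∧
    (∀ i j : Fin (m + n + p), m + n ≤ (i : ℕ) → (i : ℕ) < (j : ℕ) → σ i < σ j)

def gamma3 (α β γ : List ℕ) {K : ℕ}
    (σ : Fin (α.length + β.length + γ.length) → Fin K) : List ℕ :=
  List.ofFn (fun i : Fin K =>
    ∑ j : Fin (α.length + β.length + γ.length),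
      if σ j = i then (α ++ β ++ γ).getD (j : ℕ) 0 else 0)

noncomputable def tripleCoeff (α β γ δ : List ℕ) : ℕ :=
  Nat.card {σ : Fin (α.length + β.length + γ.length) → Fin δ.length //
    IsTriple α.length β.length γ.length σ ∧ gamma3 α β γ σ = δ}

/-- rotate blocks: first block of size m moved to the end -/
def rotFun (m n p : ℕ) : Fin (n + p + m) → Fin (m + n + p) := fun j =>
  if h : (j : ℕ) < n + p then ⟨m + j, by omega⟩ else ⟨(j : ℕ) - (n + p), by omega⟩

lemma rotFun_val (m n p : ℕ) (j : Fin (n + p + m)) :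
    (rotFun m n p j : ℕ) = if (j : ℕ) < n + p then m + j else (j : ℕ) - (n + p) := by
  unfold rotFun; split_ifs <;> rfl

lemma rotFun_rotFun_rotFun (m n p : ℕ) (j : Fin (m + n + p)) :
    rotFun m n p (rotFun n p m (rotFun p m n j)) = j := by
  apply Fin.ext
  simp only [rotFun_val]
  have := j.2
  split_ifs <;> omega

lemma isTriple_rot {m n p K : ℕ} {σ : Fin (m + n + p) → Fin K} (h : IsTriple m n p σ) :
    IsTriple n p m (σ ∘ rotFun m n p) := by
  obtain ⟨hs, h1, h2, h3⟩ := h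
  refine ⟨fun x => ?_, fun i j hij hj => ?_, fun i j hi hij hj => ?_, fun i j hi hij => ?_⟩
  · obtain ⟨y, hy⟩ := hs x
    refine ⟨rotFun n p m (rotFun p m n y), ?_⟩
    simpa [Function.comp, rotFun_rotFun_rotFun] using hy
  · have vi : (rotFun m n p i : ℕ) = m + i := by rw [rotFun_val, if_pos (by omega)]
    have vj : (rotFun m n p j : ℕ) = m + j := by rw [rotFun_val, if_pos (by omega)]
    exact h2 _ _ (by omega) (by omega) (by omega)
  · have vi : (rotFun m n p i : ℕ) = m + i := by rw [rotFun_val, if_pos (by omega)]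
    have vj : (rotFun m n p j : ℕ) = m + j := by rw [rotFun_val, if_pos (by omega)]
    exact h3 _ _ (by omega) (by omega)
  · have vi : (rotFun m n p i : ℕ) = (i : ℕ) - (n + p) := by rw [rotFun_val, if_neg (by omega)]
    have vj : (rotFun m n p j : ℕ) = (j : ℕ) - (n + p) := by rw [rotFun_val, if_neg (by omega)]
    exact h1 _ _ (by omega) (by have := j.2; omega)

lemma getD_rot (α β γ : List ℕ) (j : Fin (β.length + γ.length + α.length)) :
    (β ++ γ ++ α).getD (j : ℕ) 0
      = (α ++ β ++ γ).getD ((rotFun α.length β.length γ.length j : Fin _) : ℕ) 0 := by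
  rw [getD_append_ite, getD_append_ite, getD_append_ite, getD_append_ite, rotFun_val]
  simp only [List.length_append]
  have := j.2
  split_ifs <;> first
    | omega
    | (congr 1; omega)

lemma gamma3_rot (α β γ : List ℕ) {K : ℕ}
    (σ : Fin (α.length + β.length + γ.length) → Fin K) :
    gamma3 β γ α (σ ∘ rotFun α.length β.length γ.length) = gamma3 α β γ σ := by
  unfold gamma3
  congr 1
  funext i
  set m := α.length; set n := β.length; set p := γ.length
  have hli : Function.LeftInverse (rotFun m n p)
      (fun j => rotFun n p m (rotFun p m n j)) := fun j => rotFun_rotFun_rotFun m n p j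
  have hri : Function.RightInverse (rotFun m n p)
      (fun j => rotFun n p m (rotFun p m n j)) := fun j => rotFun_rotFun_rotFun n p m j
  refine Fintype.sum_equiv ⟨rotFun m n p, _, hri, hli⟩ _ _ (fun j => ?_)
  simp only [Equiv.coe_fn_mk, Function.comp]
  congr 1
  exact getD_rot α β γ j

lemma tripleCoeff_rot (α β γ δ : List ℕ) :
    tripleCoeff α β γ δ = tripleCoeff β γ α δ := by
  unfold tripleCoeff
  apply Nat.card_congr
  set m := α.length; set n := β.length; set p := γ.length
  refine ⟨fun t => ⟨t.1 ∘ rotFun m n p, isTriple_rot t.2.1,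
      by rw [gamma3_rot]; exact t.2.2⟩,
    fun t => ⟨(t.1 ∘ rotFun n p m) ∘ rotFun p m n,
      isTriple_rot (isTriple_rot t.2.1), by
        rw [show (t.1 ∘ rotFun n p m) ∘ rotFun p m n
            = (t.1 ∘ rotFun n p m) ∘ rotFun p m n from rfl]
        rw [gamma3_rot (γ := β) (α := γ) (β := α)]
        rw [gamma3_rot (α := β) (β := γ) (γ := α)]
        exact t.2.2⟩, ?_, ?_⟩
  · rintro ⟨σ, h⟩
    apply Subtype.ext
    funext j
    exact congrArg σ (rotFun_rotFun_rotFun m n p j)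
  · rintro ⟨σ, h⟩
    apply Subtype.ext
    funext j
    show σ (rotFun n p m (rotFun p m n (rotFun m n p j))) = σ j
    exact congrArg σ (rotFun_rotFun_rotFun n p m j)
/-! ### decomposition of triple shuffles -/

lemma gammaComp_length (α β : List ℕ) {k : ℕ} (τ : Fin (α.length + β.length) → Fin k) :
    (gammaComp α β τ).length = k := by
  unfold gammaComp; rw [List.length_ofFn]

lemma gammaComp_getD (α β : List ℕ) {k : ℕ} (τ : Fin (α.length + β.length) → Fin k)
    (x : Fin k) :
    (gammaComp α β τ).getD (x : ℕ) 0
      = ∑ j : Fin (α.length + β.length), if τ j = x then (α ++ β).getD (j : ℕ) 0 else 0 := by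
  unfold gammaComp
  rw [List.getD_eq_getElem _ _ (by rw [List.length_ofFn]; exact x.2), List.getElem_ofFn]

/-- build a triple shuffle out of a shuffle `τ1` of the first two blocks and a
shuffle `τ2` of the result with the third block -/
def buildSigma {m n p k1 K : ℕ} (τ1 : Fin (m + n) → Fin k1) (τ2 : Fin (k1 + p) → Fin K) :
    Fin (m + n + p) → Fin K := fun i =>
  if h : (i : ℕ) < m + n then τ2 (Fin.castAdd p (τ1 ⟨i, h⟩))
  else τ2 (Fin.natAdd k1 ⟨(i : ℕ) - (m + n), by omega⟩)

lemma buildSigma_lo {m n p k1 K : ℕ} (τ1 : Fin (m + n) → Fin k1) (τ2 : Fin (k1 + p) → Fin K)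
    (i : Fin (m + n + p)) (h : (i : ℕ) < m + n) :
    buildSigma τ1 τ2 i = τ2 (Fin.castAdd p (τ1 ⟨i, h⟩)) := dif_pos h

lemma buildSigma_hi {m n p k1 K : ℕ} (τ1 : Fin (m + n) → Fin k1) (τ2 : Fin (k1 + p) → Fin K)
    (i : Fin (m + n + p)) (h : ¬ (i : ℕ) < m + n) :
    buildSigma τ1 τ2 i = τ2 (Fin.natAdd k1 ⟨(i : ℕ) - (m + n), by omega⟩) := dif_neg h

lemma buildSigma_castAdd {m n p k1 K : ℕ} (τ1 : Fin (m + n) → Fin k1)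
    (τ2 : Fin (k1 + p) → Fin K) (j : Fin (m + n)) :
    buildSigma τ1 τ2 (Fin.castAdd p j) = τ2 (Fin.castAdd p (τ1 j)) := by
  rw [buildSigma_lo _ _ _ (by simp)]
  exact congrArg (fun x => τ2 (Fin.castAdd p (τ1 x))) (Fin.ext rfl)

lemma buildSigma_natAdd {m n p k1 K : ℕ} (τ1 : Fin (m + n) → Fin k1)
    (τ2 : Fin (k1 + p) → Fin K) (z : Fin p) :
    buildSigma τ1 τ2 (Fin.natAdd (m + n) z) = τ2 (Fin.natAdd k1 z) := by
  rw [buildSigma_hi _ _ _ (by simp)]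
  congr 1
  apply Fin.ext
  simp

/-- The master computation: composing the two shuffles computes `gamma3`. -/
lemma gammaComp_buildSigma (α β γ ε : List ℕ) {K : ℕ}
    (τ1 : Fin (α.length + β.length) → Fin ε.length)
    (τ2 : Fin (ε.length + γ.length) → Fin K)
    (hε : gammaComp α β τ1 = ε) :
    gammaComp ε γ τ2 = gamma3 α β γ (buildSigma τ1 τ2) := by
  have hE : ∀ x : Fin ε.length, ε.getD (x : ℕ) 0
      = ∑ j : Fin (α.length + β.length), if τ1 j = x then (α ++ β).getD (j : ℕ) 0 else 0 := by
    intro x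
    have h2 := congrArg (fun l : List ℕ => l.getD (x : ℕ) 0) hε
    rw [gammaComp_getD] at h2
    exact h2.symm
  have hG1 : ∀ i : ℕ, i < α.length + β.length →
      (α ++ β ++ γ).getD i 0 = (α ++ β).getD i 0 := by
    intro i hi
    rw [getD_append_ite (α ++ β) γ, if_pos (by rw [List.length_append]; omega)]
  have hG2 : ∀ i : ℕ, (α ++ β ++ γ).getD (α.length + β.length + i) 0 = γ.getD i 0 := by
    intro i
    rw [getD_append_ite (α ++ β) γ, if_neg (by rw [List.length_append]; omega)]
    congr 1
    rw [List.length_append]; omega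
  have hG3 : ∀ x : Fin ε.length, (ε ++ γ).getD (x : ℕ) 0 = ε.getD (x : ℕ) 0 :=
    fun x => List.getD_append _ _ _ _ x.2
  have hG4 : ∀ i : ℕ, (ε ++ γ).getD (ε.length + i) 0 = γ.getD i 0 := by
    intro i
    rw [List.getD_append_right _ _ _ _ (by omega)]
    congr 1; omega
  unfold gammaComp gamma3
  congr 1
  funext i
  rw [Fin.sum_univ_add (f := fun y : Fin (ε.length + γ.length) =>
    if τ2 y = i then (ε ++ γ).getD (y : ℕ) 0 else 0)]
  rw [Fin.sum_univ_add (f := fun w : Fin (α.length + β.length + γ.length) =>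
    if buildSigma τ1 τ2 w = i then (α ++ β ++ γ).getD (w : ℕ) 0 else 0)]
  congr 1
  · -- first parts
    calc (∑ x : Fin ε.length, if τ2 (Fin.castAdd γ.length x) = i
            then (ε ++ γ).getD ((Fin.castAdd γ.length x : Fin _) : ℕ) 0 else 0)
        = ∑ x : Fin ε.length, ∑ j : Fin (α.length + β.length),
            if τ1 j = x then (if τ2 (Fin.castAdd γ.length x) = i
              then (α ++ β).getD (j : ℕ) 0 else 0) else 0 := by
          refine Finset.sum_congr rfl fun x _ => ?_
          rw [Fin.coe_castAdd, hG3, hE]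
          by_cases hc : τ2 (Fin.castAdd γ.length x) = i
          · simp [hc]
          · simp [hc]
      _ = ∑ j : Fin (α.length + β.length), ∑ x : Fin ε.length,
            if τ1 j = x then (if τ2 (Fin.castAdd γ.length x) = i
              then (α ++ β).getD (j : ℕ) 0 else 0) else 0 := Finset.sum_comm
      _ = ∑ j : Fin (α.length + β.length),
            if buildSigma τ1 τ2 (Fin.castAdd γ.length j) = i
              then (α ++ β ++ γ).getD ((Fin.castAdd γ.length j : Fin _) : ℕ) 0 else 0 := by
          refine Finset.sum_congr rfl fun j _ => ?_
          rw [Finset.sum_ite_eq]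
          simp only [Finset.mem_univ, if_true]
          rw [buildSigma_castAdd, Fin.coe_castAdd, hG1 _ j.2]
  · -- second parts
    refine Finset.sum_congr rfl fun z _ => ?_
    rw [buildSigma_natAdd]
    congr 1
    simp only [Fin.coe_natAdd]
    rw [hG4, hG2]
/-! ### the image set and the projection map -/

def Aset (m n : ℕ) {p K : ℕ} (σ : Fin (m + n + p) → Fin K) : Finset (Fin K) :=
  Finset.image (fun j : Fin (m + n) => σ (Fin.castAdd p j)) Finset.univ

def piMap (α β : List ℕ) {p K : ℕ} (σ : Fin (α.length + β.length + p) → Fin K) : List ℕ :=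
  List.ofFn (fun i : Fin (Aset α.length β.length σ).card =>
    ∑ j : Fin (α.length + β.length),
      if σ (Fin.castAdd p j) = (Aset α.length β.length σ).orderEmbOfFin rfl i
        then (α ++ β).getD (j : ℕ) 0 else 0)

lemma piMap_length (α β : List ℕ) {p K : ℕ} (σ : Fin (α.length + β.length + p) → Fin K) :
    (piMap α β σ).length = (Aset α.length β.length σ).card := List.length_ofFn

lemma piMap_getD (α β : List ℕ) {p K : ℕ} (σ : Fin (α.length + β.length + p) → Fin K)
    (i : ℕ) (hi : i < (Aset α.length β.length σ).card) :
    (piMap α β σ).getD i 0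
      = ∑ j : Fin (α.length + β.length),
          if σ (Fin.castAdd p j) = (Aset α.length β.length σ).orderEmbOfFin rfl ⟨i, hi⟩
            then (α ++ β).getD (j : ℕ) 0 else 0 := by
  unfold piMap
  rw [List.getD_eq_getElem _ _ (by rw [List.length_ofFn]; exact hi), List.getElem_ofFn]

lemma gammaComp_getD' (α β : List ℕ) {k : ℕ} (τ : Fin (α.length + β.length) → Fin k)
    (i : ℕ) (hi : i < k) :
    (gammaComp α β τ).getD i 0
      = ∑ j : Fin (α.length + β.length),
          if τ j = ⟨i, hi⟩ then (α ++ β).getD (j : ℕ) 0 else 0 :=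
  gammaComp_getD α β τ ⟨i, hi⟩

section build

variable {m n p k1 K : ℕ} {τ1 : Fin (m + n) → Fin k1} {τ2 : Fin (k1 + p) → Fin K}

lemma strictMono_g (h2 : IsOverlappingShuffle k1 p τ2) :
    StrictMono (fun x : Fin k1 => τ2 (Fin.castAdd p x)) := by
  intro x y hxy
  exact h2.2.1 _ _ (by simpa using hxy) (by simp [y.2])

lemma Aset_buildSigma (h1s : Function.Surjective τ1) :
    Aset m n (buildSigma τ1 τ2)
      = Finset.image (fun x : Fin k1 => τ2 (Fin.castAdd p x)) Finset.univ := by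
  unfold Aset
  have : (fun j : Fin (m + n) => buildSigma τ1 τ2 (Fin.castAdd p j))
      = (fun x : Fin k1 => τ2 (Fin.castAdd p x)) ∘ τ1 := by
    funext j; exact buildSigma_castAdd τ1 τ2 j
  rw [this, ← Finset.image_image, Finset.image_univ_of_surjective h1s]

lemma card_Aset_buildSigma (h1s : Function.Surjective τ1)
    (h2 : IsOverlappingShuffle k1 p τ2) :
    (Aset m n (buildSigma τ1 τ2)).card = k1 := by
  rw [Aset_buildSigma h1s,
    Finset.card_image_of_injective _ (strictMono_g h2).injective,
    Finset.card_univ, Fintype.card_fin]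

lemma orderEmbOfFin_Aset_buildSigma (h1s : Function.Surjective τ1)
    (h2 : IsOverlappingShuffle k1 p τ2)
    (hc : (Aset m n (buildSigma τ1 τ2)).card = k1) (x : Fin k1) :
    (Aset m n (buildSigma τ1 τ2)).orderEmbOfFin hc x = τ2 (Fin.castAdd p x) := by
  have := Finset.orderEmbOfFin_unique hc
    (f := fun x : Fin k1 => τ2 (Fin.castAdd p x))
    (fun x => by rw [Aset_buildSigma h1s]; exact Finset.mem_image_of_mem _ (Finset.mem_univ x))
    (strictMono_g h2)
  exact (congrFun this x).symm

lemma isTriple_buildSigma (h1 : IsOverlappingShuffle m n τ1)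
    (h2 : IsOverlappingShuffle k1 p τ2) :
    IsTriple m n p (buildSigma τ1 τ2) := by
  refine ⟨?_, ?_, ?_, ?_⟩
  · intro x
    obtain ⟨y, hy⟩ := h2.1 x
    by_cases hy1 : (y : ℕ) < k1
    · obtain ⟨j, hj⟩ := h1.1 ⟨y, hy1⟩
      refine ⟨Fin.castAdd p j, ?_⟩
      rw [buildSigma_castAdd, hj]
      rw [show Fin.castAdd p (⟨(y : ℕ), hy1⟩ : Fin k1) = y from Fin.ext rfl]
      exact hy
    · refine ⟨Fin.natAdd (m + n) ⟨(y : ℕ) - k1, by omega⟩, ?_⟩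
      rw [buildSigma_natAdd]
      rw [show Fin.natAdd k1 (⟨(y : ℕ) - k1, by omega⟩ : Fin p) = y from Fin.ext (by simp; omega)]
      exact hy
  · intro i j hij hj
    rw [buildSigma_lo _ _ i (by omega), buildSigma_lo _ _ j (by omega)]
    exact strictMono_g h2 (h1.2.1 ⟨i, by omega⟩ ⟨j, by omega⟩ hij hj)
  · intro i j hi hij hj
    rw [buildSigma_lo _ _ i (by omega), buildSigma_lo _ _ j (by omega)]
    exact strictMono_g h2 (h1.2.2 ⟨i, by omega⟩ ⟨j, by omega⟩ hi hij)
  · intro i j hi hij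
    rw [buildSigma_hi _ _ i (by omega), buildSigma_hi _ _ j (by omega)]
    exact h2.2.2 _ _ (by simp) (by simp; omega)

end build

lemma piMap_buildSigma (α β : List ℕ) {p K : ℕ} (ε : List ℕ)
    (τ1 : Fin (α.length + β.length) → Fin ε.length)
    (τ2 : Fin (ε.length + p) → Fin K)
    (h1 : IsOverlappingShuffle α.length β.length τ1)
    (h2 : IsOverlappingShuffle ε.length p τ2)
    (h1g : gammaComp α β τ1 = ε) :
    piMap α β (buildSigma τ1 τ2) = ε := by
  have hc : (Aset α.length β.length (buildSigma τ1 τ2)).card = ε.length :=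
    card_Aset_buildSigma h1.1 h2
  apply List.ext_getElem (by rw [piMap_length, hc])
  intro i hi1 hi2
  have hi : i < (Aset α.length β.length (buildSigma τ1 τ2)).card := by rw [hc]; exact hi2
  rw [← List.getD_eq_getElem _ 0 hi1, ← List.getD_eq_getElem _ 0 hi2]
  rw [piMap_getD _ _ _ i hi]
  conv_rhs => rw [← h1g]
  rw [gammaComp_getD' _ _ _ i hi2]
  refine Finset.sum_congr rfl fun j _ => if_congr ?_ rfl rfl
  rw [buildSigma_castAdd]
  rw [show (Aset α.length β.length (buildSigma τ1 τ2)).orderEmbOfFin rfl ⟨i, hi⟩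
      = τ2 (Fin.castAdd p (⟨i, hi2⟩ : Fin ε.length)) from ?_]
  · exact ⟨fun h => by
      have := (strictMono_g h2).injective h
      rw [this], fun h => by rw [h]⟩
  · rw [← orderEmbOfFin_Aset_buildSigma h1.1 h2 hc ⟨i, hi2⟩]
    exact Finset.orderEmbOfFin_eq_orderEmbOfFin_iff.mpr rfl
/-! ### reconstruction -/

noncomputable def recon1 (m n : ℕ) {p K : ℕ} (σ : Fin (m + n + p) → Fin K) {k1 : ℕ}
    (hc : (Aset m n σ).card = k1) : Fin (m + n) → Fin k1 := fun j =>
  ((Aset m n σ).orderIsoOfFin hc).symm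
    ⟨σ (Fin.castAdd p j), Finset.mem_image_of_mem _ (Finset.mem_univ j)⟩

noncomputable def recon2 (m n : ℕ) {p K : ℕ} (σ : Fin (m + n + p) → Fin K) {k1 : ℕ}
    (hc : (Aset m n σ).card = k1) : Fin (k1 + p) → Fin K := fun y =>
  if h : (y : ℕ) < k1 then (Aset m n σ).orderEmbOfFin hc ⟨y, h⟩
  else σ ⟨m + n + ((y : ℕ) - k1), by omega⟩

section recon

variable {m n p K k1 : ℕ} {σ : Fin (m + n + p) → Fin K} {hc : (Aset m n σ).card = k1}

lemma recon1_spec (j : Fin (m + n)) :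
    (Aset m n σ).orderEmbOfFin hc (recon1 m n σ hc j) = σ (Fin.castAdd p j) := by
  unfold recon1
  rw [← Finset.coe_orderIsoOfFin_apply, OrderIso.apply_symm_apply]

lemma recon1_eq_iff (j : Fin (m + n)) (x : Fin k1) :
    recon1 m n σ hc j = x ↔ σ (Fin.castAdd p j) = (Aset m n σ).orderEmbOfFin hc x := by
  constructor
  · rintro rfl; exact (recon1_spec j).symm
  · intro h
    apply ((Aset m n σ).orderEmbOfFin hc).injective
    rw [recon1_spec, h]

lemma recon1_lt_iff (a b : Fin (m + n)) :
    recon1 m n σ hc a < recon1 m n σ hc b ↔ σ (Fin.castAdd p a) < σ (Fin.castAdd p b) := by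
  rw [← ((Aset m n σ).orderEmbOfFin hc).lt_iff_lt, recon1_spec, recon1_spec]

lemma recon2_lo (y : Fin (k1 + p)) (h : (y : ℕ) < k1) :
    recon2 m n σ hc y = (Aset m n σ).orderEmbOfFin hc ⟨y, h⟩ := dif_pos h

lemma recon2_hi (y : Fin (k1 + p)) (h : ¬ (y : ℕ) < k1) :
    recon2 m n σ hc y = σ ⟨m + n + ((y : ℕ) - k1), by omega⟩ := dif_neg h

lemma buildSigma_recon : buildSigma (recon1 m n σ hc) (recon2 m n σ hc) = σ := by
  funext w
  by_cases hw : (w : ℕ) < m + n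
  · rw [buildSigma_lo _ _ w hw, recon2_lo _ (by simp)]
    rw [show (⟨((Fin.castAdd p (recon1 m n σ hc ⟨w, hw⟩) : Fin (k1 + p)) : ℕ), by simp⟩ : Fin k1)
        = recon1 m n σ hc ⟨w, hw⟩ from Fin.ext rfl]
    rw [recon1_spec]
    exact congrArg σ (Fin.ext rfl)
  · rw [buildSigma_hi _ _ w hw, recon2_hi _ (by simp)]
    exact congrArg σ (Fin.ext (by simp; omega))

end recon

lemma buildSigma_inj {m n p k1 K : ℕ} {τ1 τ1' : Fin (m + n) → Fin k1}
    {τ2 τ2' : Fin (k1 + p) → Fin K}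
    (h1 : Function.Surjective τ1) (h1' : Function.Surjective τ1')
    (h2 : IsOverlappingShuffle k1 p τ2) (h2' : IsOverlappingShuffle k1 p τ2')
    (h : buildSigma τ1 τ2 = buildSigma τ1' τ2') : τ1 = τ1' ∧ τ2 = τ2' := by
  have hca : ∀ j, τ2 (Fin.castAdd p (τ1 j)) = τ2' (Fin.castAdd p (τ1' j)) := fun j => by
    rw [← buildSigma_castAdd τ1 τ2, ← buildSigma_castAdd τ1' τ2', h]
  have hna : ∀ z : Fin p, τ2 (Fin.natAdd k1 z) = τ2' (Fin.natAdd k1 z) := fun z => by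
    rw [← buildSigma_natAdd τ1 τ2, ← buildSigma_natAdd τ1' τ2', h]
  have hgg : (fun x : Fin k1 => τ2 (Fin.castAdd p x))
      = (fun x : Fin k1 => τ2' (Fin.castAdd p x)) := by
    have hr : Set.range (fun x : Fin k1 => τ2 (Fin.castAdd p x))
        = Set.range (fun x : Fin k1 => τ2' (Fin.castAdd p x)) := by
      rw [← Function.Surjective.range_comp h1 (fun x : Fin k1 => τ2 (Fin.castAdd p x)),
        ← Function.Surjective.range_comp h1' (fun x : Fin k1 => τ2' (Fin.castAdd p x))]
      exact congrArg Set.range (funext hca)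
    haveI : WellFoundedLT (Fin k1) := inferInstance
    exact (StrictMono.range_inj (strictMono_g h2) (strictMono_g h2')).mp hr
  have hτ1 : τ1 = τ1' := by
    funext j
    apply (strictMono_g h2).injective
    show τ2 (Fin.castAdd p (τ1 j)) = τ2 (Fin.castAdd p (τ1' j))
    rw [hca j]
    exact (congrFun hgg (τ1' j)).symm
  refine ⟨hτ1, ?_⟩
  funext y
  by_cases hy : (y : ℕ) < k1
  · rw [show y = Fin.castAdd p (⟨(y : ℕ), hy⟩ : Fin k1) from Fin.ext rfl]
    exact congrFun hgg _
  · rw [show y = Fin.natAdd k1 (⟨(y : ℕ) - k1, by omega⟩ : Fin p) from Fin.ext (by simp; omega)]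
    exact hna _

lemma buildSigma_surj (α β γ δ ε : List ℕ)
    (σ : Fin (α.length + β.length + γ.length) → Fin δ.length)
    (hT : IsTriple α.length β.length γ.length σ)
    (hg : gamma3 α β γ σ = δ)
    (hπ : piMap α β σ = ε) :
    ∃ (τ1 : Fin (α.length + β.length) → Fin ε.length)
      (τ2 : Fin (ε.length + γ.length) → Fin δ.length),
      (IsOverlappingShuffle α.length β.length τ1 ∧ gammaComp α β τ1 = ε) ∧
      (IsOverlappingShuffle ε.length γ.length τ2 ∧ gammaComp ε γ τ2 = δ) ∧
      buildSigma τ1 τ2 = σ := by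
  have hc : (Aset α.length β.length σ).card = ε.length := by
    rw [← hπ, piMap_length]
  have h1g : gammaComp α β (recon1 α.length β.length σ hc) = ε := by
    apply List.ext_getElem (by rw [gammaComp_length])
    intro i hi1 hi2
    have hi0 : i < ε.length := hi2
    have hi : i < (Aset α.length β.length σ).card := by rw [hc]; exact hi0
    rw [← List.getD_eq_getElem _ 0 hi1, ← List.getD_eq_getElem _ 0 hi2]
    rw [gammaComp_getD' _ _ _ i hi0]
    conv_rhs => rw [← hπ]
    rw [piMap_getD _ _ _ i hi]
    refine Finset.sum_congr rfl fun j _ => if_congr ?_ rfl rfl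
    rw [recon1_eq_iff]
    rw [show (Aset α.length β.length σ).orderEmbOfFin rfl ⟨i, hi⟩
        = (Aset α.length β.length σ).orderEmbOfFin hc ⟨i, hi0⟩ from
      Finset.orderEmbOfFin_eq_orderEmbOfFin_iff (h := rfl) (h' := hc) |>.mpr rfl]
  refine ⟨recon1 _ _ σ hc, recon2 _ _ σ hc, ⟨⟨?_, ?_, ?_⟩, h1g⟩, ⟨⟨?_, ?_, ?_⟩, ?_⟩,
    buildSigma_recon⟩
  · -- τ1 surjective
    intro x
    have hx := Finset.orderEmbOfFin_mem (Aset α.length β.length σ) hc x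
    obtain ⟨j, -, hj⟩ := Finset.mem_image.mp hx
    exact ⟨j, (recon1_eq_iff j x).mpr hj⟩
  · -- τ1 strict on first block
    intro i j hij hj
    exact (recon1_lt_iff i j).mpr (hT.2.1 _ _ (by simpa using hij) (by simpa using hj))
  · -- τ1 strict on second block
    intro i j hi hij
    exact (recon1_lt_iff i j).mpr
      (hT.2.2.1 _ _ (by simpa using hi) (by simpa using hij) (by simp))
  · -- τ2 surjective
    intro x
    obtain ⟨w, hw⟩ := hT.1 x
    by_cases hw1 : (w : ℕ) < α.length + β.length
    · have hxA : x ∈ Aset α.length β.length σ := by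
        rw [← hw]
        refine Finset.mem_image.mpr ⟨⟨(w : ℕ), hw1⟩, Finset.mem_univ _, ?_⟩
        exact congrArg σ (Fin.ext rfl)
      obtain ⟨y, hy⟩ := ((Aset α.length β.length σ).orderIsoOfFin hc).surjective ⟨x, hxA⟩
      refine ⟨⟨(y : ℕ), by omega⟩, ?_⟩
      rw [recon2_lo _ (by simp [y.2])]
      have hemb : (Aset α.length β.length σ).orderEmbOfFin hc y = x := by
        rw [← Finset.coe_orderIsoOfFin_apply, hy]
      exact Eq.trans (congrArg ((Aset α.length β.length σ).orderEmbOfFin hc) (Fin.ext rfl)) hemb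
    · refine ⟨⟨ε.length + ((w : ℕ) - (α.length + β.length)), by omega⟩, ?_⟩
      rw [recon2_hi _ (by simp)]
      exact Eq.trans (congrArg σ (Fin.ext (by simp; omega))) hw
  · -- τ2 strict on first block
    intro i j hij hj
    rw [recon2_lo i (by omega), recon2_lo j (by omega)]
    exact ((Aset α.length β.length σ).orderEmbOfFin hc).strictMono (by simpa using hij)
  · -- τ2 strict on second block
    intro i j hi hij
    rw [recon2_hi i (by omega), recon2_hi j (by omega)]
    exact hT.2.2.2 _ _ (by simp) (by simp; omega)
  · -- gammaComp ε γ τ2 = δ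
    rw [gammaComp_buildSigma α β γ ε _ _ h1g, buildSigma_recon]
    exact hg
/-! ### counting -/

lemma finsum_card_fiber {T A : Type*} [Finite T] (π : T → A) :
    ∑ᶠ a : A, Nat.card {t : T // π t = a} = Nat.card T := by
  classical
  cases nonempty_fintype T
  have hsub : (Function.support fun a => Nat.card {t : T // π t = a})
      ⊆ ↑(Finset.image π Finset.univ) := by
    intro a ha
    rw [Function.mem_support] at ha
    have hne : Nonempty {t : T // π t = a} := by
      by_contra h
      rw [not_nonempty_iff] at h
      exact ha Nat.card_of_isEmpty
    obtain ⟨t, ht⟩ := hne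
    exact Finset.mem_coe.mpr (Finset.mem_image.mpr ⟨t, Finset.mem_univ t, ht⟩)
  rw [finsum_eq_sum_of_support_subset _ hsub]
  rw [Nat.card_eq_fintype_card, ← Finset.card_univ,
    Finset.card_eq_sum_card_fiberwise (fun x _ => Finset.mem_image_of_mem π (Finset.mem_univ x))]
  refine Finset.sum_congr rfl fun a _ => ?_
  rw [Nat.card_eq_fintype_card, Fintype.card_subtype]

lemma step2 (α β γ δ ε : List ℕ) :
    shuffleCoeff α β ε * shuffleCoeff ε γ δ
      = Nat.card {t : {σ : Fin (α.length + β.length + γ.length) → Fin δ.length //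
          IsTriple α.length β.length γ.length σ ∧ gamma3 α β γ σ = δ} //
          piMap α β t.1 = ε} := by
  rw [shuffleCoeff, shuffleCoeff, ← Nat.card_prod]
  apply Nat.card_eq_of_bijective
    (f := fun t => ⟨⟨buildSigma t.1.1 t.2.1,
      isTriple_buildSigma t.1.2.1 t.2.2.1,
      by rw [← gammaComp_buildSigma α β γ ε t.1.1 t.2.1 t.1.2.2]; exact t.2.2.2⟩,
      piMap_buildSigma α β ε t.1.1 t.2.1 t.1.2.1 t.2.2.1 t.1.2.2⟩)
  constructor
  · intro t s h
    have h0 : buildSigma t.1.1 t.2.1 = buildSigma s.1.1 s.2.1 :=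
      congrArg (fun x => x.1.1) h
    obtain ⟨e1, e2⟩ := buildSigma_inj t.1.2.1.1 s.1.2.1.1 t.2.2.1 s.2.2.1 h0
    exact Prod.ext (Subtype.ext e1) (Subtype.ext e2)
  · rintro ⟨⟨σ, hT, hgm⟩, hπ⟩
    obtain ⟨τ1, τ2, ⟨h1, h1g⟩, ⟨h2, h2g⟩, hbs⟩ := buildSigma_surj α β γ δ ε σ hT hgm hπ
    exact ⟨⟨⟨τ1, h1, h1g⟩, ⟨τ2, h2, h2g⟩⟩, Subtype.ext (Subtype.ext hbs)⟩

lemma sum_shuffle_eq_tripleCoeff (α β γ δ : List ℕ) :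
    ∑ᶠ ε : List ℕ, shuffleCoeff α β ε * shuffleCoeff ε γ δ = tripleCoeff α β γ δ := by
  rw [tripleCoeff,
    ← finsum_card_fiber (T := {σ : Fin (α.length + β.length + γ.length) → Fin δ.length //
        IsTriple α.length β.length γ.length σ ∧ gamma3 α β γ σ = δ})
      (fun t => piMap α β t.1)]
  exact finsum_congr fun ε => step2 α β γ δ ε

/-- The overlapping shuffle product is commutative and associative, as formal
ℤ-linear combinations of compositions (expressed coefficientwise). -/
theorem stmt_15 (α β γ : List ℕ) (hα : ∀ a ∈ α, 0 < a) (hβ : ∀ a ∈ β, 0 < a)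
    (hγ : ∀ a ∈ γ, 0 < a) :
    (∀ δ : List ℕ, shuffleCoeff α β δ = shuffleCoeff β α δ) ∧
    (∀ δ : List ℕ,
      ∑ᶠ ε : List ℕ, shuffleCoeff α β ε * shuffleCoeff ε γ δ
        = ∑ᶠ ε : List ℕ, shuffleCoeff β γ ε * shuffleCoeff α ε δ) := by
  refine ⟨fun δ => shuffleCoeff_comm α β δ, fun δ => ?_⟩
  calc ∑ᶠ ε : List ℕ, shuffleCoeff α β ε * shuffleCoeff ε γ δ
      = tripleCoeff α β γ δ := sum_shuffle_eq_tripleCoeff α β γ δ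
    _ = tripleCoeff β γ α δ := tripleCoeff_rot α β γ δ
    _ = ∑ᶠ ε : List ℕ, shuffleCoeff β γ ε * shuffleCoeff ε α δ :=
        (sum_shuffle_eq_tripleCoeff β γ α δ).symm
    _ = ∑ᶠ ε : List ℕ, shuffleCoeff β γ ε * shuffleCoeff α ε δ :=
        finsum_congr fun ε => by rw [shuffleCoeff_comm α ε δ]
end
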